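/- Let (ρ_k)_{k≥1}, (d_k)_{k≥1} be positive reals with 2ρ_k ≤ ρ_{k+1}, 3 ≤ d_k ≤ 0.1ρ_k, and set I_k = [ρ_k − d_k, ρ_k + d_k] and J_k = [ρ_k − d_k/2, ρ_k + d_k/2]. Let G : ℤ → ℝ satisfy Σ_{n∈ℤ} G(n)²/(|n| + 1) < ∞, set g_k = Σ_{n∈I_k∩ℤ} G(n)², and assume there is a constant C > 0 such that Σ_{n∈ℤ∖I_k} G(n)²/|n − ρ_k| ≤ C·g_k/d_k for every k. Then there exists a constant C' > 0 (independent of k) such that for every k there is a set N_k ⊆ J_k ∩ ℤ with |N_k| ≥ d_k/2 such that for every n ∈ N_k: Σ_{m∈ℤ} G(m)²/(n + 1/2 − m)² ≤ C'·g_k/d_k and |Σ_{m∈ℤ} G(m)²/(m − n − 1/2)| ≤ C'·g_k/d_k. -/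

import Mathlib

open scoped Classical

open Polynomial Finset

/-- Core of Boole's equality: for positive masses `a m` at distinct real poles,
there is a selection `Y b` of solutions of `∑ a m/(x-m) = lam`, one in each gap,
whose total displacement is `(∑ a)/lam`. -/
lemma boole_roots (poles : Finset ℝ) (hne : poles.Nonempty) (a : ℝ → ℝ)
    (ha : ∀ m ∈ poles, 0 < a m) (lam : ℝ) (hlam : 0 < lam) :
    ∃ Y : ℝ → ℝ,
      (∀ b ∈ poles, b < Y b ∧ (∀ k ∈ poles, b < k → Y b < k) ∧
        (∑ m ∈ poles, a m / (Y b - m)) = lam) ∧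
      ∑ b ∈ poles, Y b = ∑ b ∈ poles, b + (∑ m ∈ poles, a m) / lam := by
  classical
  set g := ∑ m ∈ poles, a m with hgdef
  have hgpos : 0 < g := Finset.sum_pos (fun m hm => ha m hm) hne
  set s := poles.card with hs
  have hspos : 0 < s := Finset.card_pos.mpr hne
  set P : ℝ[X] := C lam * ∏ m ∈ poles, (X - C m)
      - ∑ m ∈ poles, C (a m) * ∏ k ∈ poles.erase m, (X - C k) with hP
  have hPeval : ∀ x : ℝ, P.eval x
      = lam * ∏ m ∈ poles, (x - m) - ∑ m ∈ poles, a m * ∏ k ∈ poles.erase m, (x - k) := by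
    intro x
    simp [hP, eval_prod, eval_finset_sum]
  -- identity off poles
  have keyF : ∀ x : ℝ, (∀ m ∈ poles, x ≠ m) →
      P.eval x = (lam - ∑ m ∈ poles, a m / (x - m)) * ∏ m ∈ poles, (x - m) := by
    intro x hx
    have hterm : ∀ m ∈ poles,
        a m / (x - m) * ∏ k ∈ poles, (x - k) = a m * ∏ k ∈ poles.erase m, (x - k) := by
      intro m hm
      have hxm : x - m ≠ 0 := sub_ne_zero.mpr (hx m hm)
      rw [← Finset.mul_prod_erase poles (fun k => x - k) hm]
      field_simp
    rw [hPeval x, sub_mul, Finset.sum_mul, Finset.sum_congr rfl hterm]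
  -- evaluation at a pole
  have keyP : ∀ b ∈ poles, P.eval b = -(a b * ∏ k ∈ poles.erase b, (b - k)) := by
    intro b hb
    rw [hPeval b]
    have h1 : ∏ m ∈ poles, ((b:ℝ) - m) = 0 :=
      Finset.prod_eq_zero hb (by simp)
    have h2 : ∑ m ∈ poles, a m * ∏ k ∈ poles.erase m, (b - k)
        = a b * ∏ k ∈ poles.erase b, (b - k) := by
      refine Finset.sum_eq_single b ?_ (fun h => absurd hb h)
      intro m hm hmb
      have : ∏ k ∈ poles.erase m, ((b:ℝ) - k) = 0 :=
        Finset.prod_eq_zero (Finset.mem_erase.mpr ⟨hmb.symm, hb⟩) (by simp)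
      rw [this, mul_zero]
    rw [h1, h2, mul_zero, zero_sub]
  -- sign of the product at a pole
  have hsign : ∀ b ∈ poles, ∃ c : ℝ, 0 < c ∧
      ∏ k ∈ poles.erase b, (b - k)
        = (-1 : ℝ) ^ ((poles.filter fun k => b < k).card) * c := by
    intro b hb
    have hsplit : poles.erase b
        = (poles.filter fun k => k < b) ∪ (poles.filter fun k => b < k) := by
      ext k
      simp only [Finset.mem_erase, Finset.mem_union, Finset.mem_filter]
      constructor
      · rintro ⟨hne, hk⟩
        rcases Ne.lt_or_gt hne with h | h
        · exact Or.inl ⟨hk, h⟩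
        · exact Or.inr ⟨hk, h⟩
      · rintro (⟨hk, h⟩ | ⟨hk, h⟩)
        · exact ⟨ne_of_lt h, hk⟩
        · exact ⟨ne_of_gt h, hk⟩
    have hdisj : Disjoint (poles.filter fun k => k < b) (poles.filter fun k => b < k) := by
      rw [Finset.disjoint_left]
      intro k h1 h2
      simp only [Finset.mem_filter] at h1 h2
      exact absurd (h1.2.trans h2.2) (lt_irrefl k)
    refine ⟨(∏ k ∈ poles.filter (fun k => k < b), (b - k))
        * ∏ k ∈ poles.filter (fun k => b < k), (k - b), ?_, ?_⟩
    · apply mul_pos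
      · exact Finset.prod_pos fun k hk => sub_pos.mpr (Finset.mem_filter.mp hk).2
      · exact Finset.prod_pos fun k hk => sub_pos.mpr (Finset.mem_filter.mp hk).2
    · rw [hsplit, Finset.prod_union hdisj]
      have : ∀ k ∈ poles.filter (fun k => b < k), (b - k) = (-1) * (k - b) := by
        intro k _; ring
      rw [Finset.prod_congr rfl this, Finset.prod_mul_distrib, Finset.prod_const]
      ring
  -- root in each gap
  have hroot : ∀ b ∈ poles, ∃ y : ℝ, P.eval y = 0 ∧ b < y ∧ ∀ k ∈ poles, b < k → y < k := by
    intro b hb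
    obtain ⟨c, hc, hcs⟩ := hsign b hb
    by_cases hmax : ∃ k ∈ poles, b < k
    · -- there is a next pole
      have hfne : (poles.filter fun k => b < k).Nonempty := by
        obtain ⟨k, hk, hbk⟩ := hmax; exact ⟨k, Finset.mem_filter.mpr ⟨hk, hbk⟩⟩
      set b' := (poles.filter fun k => b < k).min' hfne with hb'def
      have hb'mem : b' ∈ poles.filter fun k => b < k := Finset.min'_mem _ hfne
      have hb'poles : b' ∈ poles := (Finset.mem_filter.mp hb'mem).1
      have hbb' : b < b' := (Finset.mem_filter.mp hb'mem).2
      have hb'min : ∀ k ∈ poles, b < k → b' ≤ k := by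
        intro k hk hbk
        exact Finset.min'_le _ _ (Finset.mem_filter.mpr ⟨hk, hbk⟩)
      obtain ⟨c', hc', hcs'⟩ := hsign b' hb'poles
      have hins : poles.filter (fun k => b < k)
          = insert b' (poles.filter fun k => b' < k) := by
        ext k
        simp only [Finset.mem_filter, Finset.mem_insert]
        constructor
        · rintro ⟨hk, hbk⟩
          rcases eq_or_ne k b' with h | h
          · exact Or.inl h
          · exact Or.inr ⟨hk, lt_of_le_of_ne (hb'min k hk hbk) (Ne.symm h)⟩
        · rintro (rfl | ⟨hk, h⟩)
          · exact ⟨hb'poles, hbb'⟩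
          · exact ⟨hk, hbb'.trans h⟩
      set e := (poles.filter fun k => b' < k).card with he
      have hcard : (poles.filter fun k => b < k).card = e + 1 := by
        rw [hins, Finset.card_insert_of_notMem (by simp [Finset.mem_filter])]
      have hpow : ((-1 : ℝ)) ^ (e + 1) * (-1 : ℝ) ^ e = -1 := by
        rw [← pow_add]
        have h2 : e + 1 + e = 2 * e + 1 := by ring
        rw [h2, pow_succ, pow_mul, neg_one_sq, one_pow, one_mul]
      have hPP : P.eval b * P.eval b' < 0 := by
        rw [keyP b hb, keyP b' hb'poles, hcs, hcs', hcard]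
        have hab := ha b hb
        have hab' := ha b' hb'poles
        have : -(a b * ((-1:ℝ) ^ (e+1) * c)) * -(a b' * ((-1:ℝ) ^ e * c'))
            = ((-1:ℝ) ^ (e+1) * (-1:ℝ) ^ e) * (a b * a b' * c * c') := by ring
        rw [this, hpow]
        nlinarith [mul_pos (mul_pos (mul_pos hab hab') hc) hc']
      have hcont : ContinuousOn (fun x => P.eval x) (Set.Icc b b') :=
        (Polynomial.continuous P).continuousOn
      rcases lt_or_ge (P.eval b) 0 with hneg | hpos
      · have hpos' : 0 < P.eval b' := by nlinarith
        have h0 : (0:ℝ) ∈ Set.Ioo (P.eval b) (P.eval b') := ⟨hneg, hpos'⟩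
        obtain ⟨y, hy, hy0⟩ := intermediate_value_Ioo hbb'.le hcont h0
        exact ⟨y, hy0, hy.1, fun k hk hbk => lt_of_lt_of_le hy.2 (hb'min k hk hbk)⟩
      · have hneg' : P.eval b' < 0 := by nlinarith
        have hpos2 : 0 < P.eval b := by
          rcases lt_or_eq_of_le hpos with h | h
          · exact h
          · exfalso; rw [← h] at hPP; simp at hPP
        have h0 : (0:ℝ) ∈ Set.Ioo (P.eval b') (P.eval b) := ⟨hneg', hpos2⟩
        obtain ⟨y, hy, hy0⟩ := intermediate_value_Ioo' hbb'.le hcont h0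
        exact ⟨y, hy0, hy.1, fun k hk hbk => lt_of_lt_of_le hy.2 (hb'min k hk hbk)⟩
    · -- b is the largest pole
      push_neg at hmax
      have hfilter : poles.filter (fun k => b < k) = ∅ := by
        rw [Finset.filter_eq_empty_iff]
        intro k hk
        exact not_lt.mpr (hmax k hk)
      have hPb : P.eval b < 0 := by
        rw [keyP b hb, hcs, hfilter]
        simp only [Finset.card_empty, pow_zero, one_mul]
        have := ha b hb
        nlinarith
      set x₂ : ℝ := b + g / lam + 1 with hx₂
      have hbx₂ : b < x₂ := by
        have : 0 < g / lam := div_pos hgpos hlam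
        rw [hx₂]; linarith
      have hnp : ∀ m ∈ poles, x₂ ≠ m := by
        intro m hm
        have := hmax m hm
        exact ne_of_gt (lt_of_le_of_lt this hbx₂)
      have hFx₂ : (∑ m ∈ poles, a m / (x₂ - m)) < lam := by
        have hle : ∀ m ∈ poles, a m / (x₂ - m) ≤ a m / (x₂ - b) := by
          intro m hm
          apply div_le_div_of_nonneg_left (ha m hm).le (by linarith)
          have := hmax m hm; linarith
        calc (∑ m ∈ poles, a m / (x₂ - m)) ≤ ∑ m ∈ poles, a m / (x₂ - b) :=
              Finset.sum_le_sum hle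
          _ = g / (g / lam + 1) := by
              rw [← Finset.sum_div, ← hgdef]
              congr 1
              rw [hx₂]; ring
          _ < lam := by
              rw [div_lt_iff₀ (by positivity)]
              nlinarith [div_pos hgpos hlam, mul_div_cancel₀ g hlam.ne']
      have hPx₂ : 0 < P.eval x₂ := by
        rw [keyF x₂ hnp]
        apply mul_pos (by linarith)
        apply Finset.prod_pos
        intro m hm
        have := hmax m hm
        linarith [lt_of_le_of_lt this hbx₂]
      have hcont : ContinuousOn (fun x => P.eval x) (Set.Icc b x₂) :=
        (Polynomial.continuous P).continuousOn
      have h0 : (0:ℝ) ∈ Set.Ioo (P.eval b) (P.eval x₂) := ⟨hPb, hPx₂⟩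
      obtain ⟨y, hy, hy0⟩ := intermediate_value_Ioo hbx₂.le hcont h0
      exact ⟨y, hy0, hy.1, fun k hk hbk => absurd (hmax k hk) (not_le.mpr hbk)⟩
  -- choose the roots
  set Y : ℝ → ℝ := fun b => if h : b ∈ poles then (hroot b h).choose else 0 with hY
  have hYspec : ∀ b ∈ poles, P.eval (Y b) = 0 ∧ b < Y b ∧ ∀ k ∈ poles, b < k → Y b < k := by
    intro b hb
    have := (hroot b hb).choose_spec
    simp only [hY, dif_pos hb]
    exact this
  have hYnp : ∀ b ∈ poles, ∀ m ∈ poles, Y b ≠ m := by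
    intro b hb m hm
    obtain ⟨_, h1, h2⟩ := hYspec b hb
    rcases le_or_gt m b with h | h
    · exact ne_of_gt (lt_of_le_of_lt h h1)
    · exact ne_of_lt (h2 m hm h)
  have hYF : ∀ b ∈ poles, (∑ m ∈ poles, a m / (Y b - m)) = lam := by
    intro b hb
    obtain ⟨h0, _, _⟩ := hYspec b hb
    have hprodne : (∏ m ∈ poles, (Y b - m)) ≠ 0 :=
      Finset.prod_ne_zero_iff.mpr fun m hm => sub_ne_zero.mpr (hYnp b hb m hm)
    have := keyF (Y b) (hYnp b hb)
    rw [h0] at this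
    rcases mul_eq_zero.mp this.symm with h | h
    · linarith [sub_eq_zero.mp h]
    · exact absurd h hprodne
  have hYinj : Set.InjOn Y poles := by
    intro b hb b' hb' heq
    by_contra hne
    rcases Ne.lt_or_gt hne with h | h
    · have h1 := (hYspec b hb).2.2 b' hb' h
      have h2 := (hYspec b' hb').2.1
      rw [heq] at h1; linarith
    · have h1 := (hYspec b' hb').2.2 b hb h
      have h2 := (hYspec b hb).2.1
      rw [← heq] at h1; linarith
  -- degree and leading coefficient facts
  have hMdeg : (∏ m ∈ poles, (X - C m : ℝ[X])).natDegree = s := by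
    rw [Polynomial.natDegree_prod _ _ (fun m _ => X_sub_C_ne_zero m)]
    simp [hs]
  have hMmonic : (∏ m ∈ poles, (X - C m : ℝ[X])).Monic :=
    monic_prod_of_monic _ _ fun m _ => monic_X_sub_C m
  have heraseDeg : ∀ m ∈ poles, (∏ k ∈ poles.erase m, (X - C k : ℝ[X])).natDegree = s - 1 := by
    intro m hm
    rw [Polynomial.natDegree_prod _ _ (fun k _ => X_sub_C_ne_zero k)]
    simp [Finset.card_erase_of_mem hm, hs]
  have heraseMonic : ∀ m ∈ poles, (∏ k ∈ poles.erase m, (X - C k : ℝ[X])).Monic :=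
    fun m _ => monic_prod_of_monic _ _ fun k _ => monic_X_sub_C k
  have hcoeffS : P.coeff s = lam := by
    rw [hP, Polynomial.coeff_sub, Polynomial.coeff_C_mul, Polynomial.finset_sum_coeff]
    have h1 : (∏ m ∈ poles, (X - C m : ℝ[X])).coeff s = 1 := by
      have := hMmonic.coeff_natDegree
      rwa [hMdeg] at this
    have h2 : ∀ m ∈ poles, (C (a m) * ∏ k ∈ poles.erase m, (X - C k : ℝ[X])).coeff s = 0 := by
      intro m hm
      rw [Polynomial.coeff_C_mul]
      rw [Polynomial.coeff_eq_zero_of_natDegree_lt, mul_zero]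
      rw [heraseDeg m hm]
      omega
    rw [h1, Finset.sum_congr rfl h2]
    simp
  have hP0 : P ≠ 0 := by
    intro h
    rw [h] at hcoeffS
    simp at hcoeffS
    exact hlam.ne' hcoeffS.symm
  have hPdeg : P.natDegree = s := by
    apply le_antisymm
    · rw [hP]
      apply le_trans (Polynomial.natDegree_sub_le _ _)
      apply max_le
      · apply le_trans (Polynomial.natDegree_mul_le)
        rw [Polynomial.natDegree_C, hMdeg]
        omega
      · apply Polynomial.natDegree_sum_le_of_forall_le
        intro m hm
        apply le_trans (Polynomial.natDegree_mul_le)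
        rw [Polynomial.natDegree_C, heraseDeg m hm]
        omega
    · exact Polynomial.le_natDegree_of_ne_zero (by rw [hcoeffS]; exact hlam.ne')
  -- divisibility by the product of the roots
  set D : ℝ[X] := ∏ x ∈ poles.image Y, (X - C x) with hD
  have himgcard : (poles.image Y).card = s := Finset.card_image_of_injOn hYinj
  have hroots : ∀ x ∈ poles.image Y, P.IsRoot x := by
    intro x hx
    obtain ⟨b, hb, rfl⟩ := Finset.mem_image.mp hx
    exact (hYspec b hb).1
  have hle : (poles.image Y).val ≤ P.roots := by
    rw [Multiset.le_iff_count]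
    intro x
    by_cases hx : x ∈ poles.image Y
    · have h1 : (poles.image Y).val.count x = 1 :=
        Multiset.count_eq_one_of_mem (poles.image Y).nodup hx
      have h2 : 1 ≤ P.roots.count x := by
        rw [Multiset.one_le_count_iff_mem]
        rw [Polynomial.mem_roots hP0]
        exact hroots x hx
      omega
    · rw [Multiset.count_eq_zero_of_notMem hx]
      omega
  have hdvd : D ∣ P := by
    have h := (Multiset.prod_X_sub_C_dvd_iff_le_roots hP0 (poles.image Y).val).mpr hle
    rwa [hD, Finset.prod]
  obtain ⟨q, hq⟩ := hdvd
  have hDmonic : D.Monic := monic_prod_of_monic _ _ fun x _ => monic_X_sub_C x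
  have hDdeg : D.natDegree = s := by
    rw [hD, Polynomial.natDegree_prod _ _ (fun x _ => X_sub_C_ne_zero x)]
    simp [himgcard]
  have hq0 : q ≠ 0 := by
    rintro rfl
    rw [mul_zero] at hq
    exact hP0 hq
  have hqdeg : q.natDegree = 0 := by
    have := Polynomial.natDegree_mul (hDmonic.ne_zero) hq0
    rw [← hq, hPdeg, hDdeg] at this
    omega
  obtain ⟨cc, rfl⟩ : ∃ cc, q = C cc := ⟨q.coeff 0, Polynomial.eq_C_of_natDegree_eq_zero hqdeg⟩
  have hcc : cc = lam := by
    have : P.coeff s = D.coeff s * cc := by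
      rw [hq, Polynomial.coeff_mul_C]
    rw [hcoeffS] at this
    have hDs : D.coeff s = 1 := by
      have := hDmonic.coeff_natDegree
      rwa [hDdeg] at this
    rw [hDs, one_mul] at this
    exact this.symm
  -- compare next-to-leading coefficients
  have hnext1 : P.coeff (s - 1) = lam * (-∑ b ∈ poles, b) - g := by
    rw [hP, Polynomial.coeff_sub, Polynomial.coeff_C_mul, Polynomial.finset_sum_coeff]
    have h1 : (∏ m ∈ poles, (X - C m : ℝ[X])).coeff (s - 1) = -∑ b ∈ poles, b := by
      have hn := Polynomial.prod_X_sub_C_nextCoeff (s := poles) (f := fun x => x)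
      rw [Polynomial.nextCoeff, if_neg (by rw [hMdeg]; omega), hMdeg] at hn
      exact hn
    have h2 : ∀ m ∈ poles, (C (a m) * ∏ k ∈ poles.erase m, (X - C k : ℝ[X])).coeff (s - 1)
        = a m := by
      intro m hm
      rw [Polynomial.coeff_C_mul]
      have : (∏ k ∈ poles.erase m, (X - C k : ℝ[X])).coeff (s - 1) = 1 := by
        have h := (heraseMonic m hm).coeff_natDegree
        rwa [heraseDeg m hm] at h
      rw [this, mul_one]
    rw [h1, Finset.sum_congr rfl h2, hgdef]
  have hnext2 : P.coeff (s - 1) = lam * (-∑ b ∈ poles, Y b) := by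
    rw [hq, hcc, Polynomial.coeff_mul_C]
    have h1 : D.coeff (s - 1) = -∑ b ∈ poles, Y b := by
      have hn := Polynomial.prod_X_sub_C_nextCoeff (s := poles.image Y) (f := fun x => x)
      rw [Polynomial.nextCoeff, if_neg (by rw [hDdeg]; omega), hDdeg] at hn
      rw [hD]
      rw [hn, Finset.sum_image (fun x hx y hy hxy => hYinj hx hy hxy)]
    rw [h1]
    ring
  refine ⟨Y, fun b hb => ⟨(hYspec b hb).2.1, (hYspec b hb).2.2, hYF b hb⟩, ?_⟩
  have heq : lam * (-∑ b ∈ poles, Y b) = lam * (-∑ b ∈ poles, b) - g := by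
    rw [← hnext2, hnext1]
  have hlam' := hlam.ne'
  field_simp
  linear_combination -heq

open Finset

lemma div_lt_div_neg_helper (A u v : ℝ) (hA : 0 < A) (huv : u < v) (hv : v < 0) :
    A / v < A / u := by
  have h := one_div_lt_one_div_of_neg_of_lt hv huv
  calc A / v = A * (1 / v) := by ring
    _ < A * (1 / u) := by
        apply mul_lt_mul_of_pos_left h hA
    _ = A / u := by ring

lemma boole_count (poles : Finset ℤ) (a : ℤ → ℝ) (ha : ∀ m ∈ poles, 0 < a m)
    (lam : ℝ) (hlam : 0 < lam) (T : Finset ℤ) :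
    ((T.filter fun n : ℤ => lam < ∑ m ∈ poles, a m / ((n : ℝ) + 1/2 - m)).card : ℝ)
      ≤ 2 * (∑ m ∈ poles, a m) / lam := by
  classical
  rcases poles.eq_empty_or_nonempty with rfl | hne
  · have hemp : (T.filter fun n : ℤ => lam
        < ∑ m ∈ (∅ : Finset ℤ), a m / ((n : ℝ) + 1/2 - m)) = ∅ := by
      apply Finset.filter_false_of_mem
      intro n _
      rw [Finset.sum_empty]
      linarith
    rw [hemp]
    simp
  set Bad := T.filter fun n : ℤ => lam < ∑ m ∈ poles, a m / ((n : ℝ) + 1/2 - m) with hBad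
  -- real poles
  set rpoles : Finset ℝ := poles.image (fun m : ℤ => (m : ℝ)) with hrp
  have hcastinj : ∀ x ∈ poles, ∀ y ∈ poles, (x : ℝ) = y → x = y := by
    intro x _ y _ h; exact_mod_cast h
  set ar : ℝ → ℝ := fun x => a ⌊x⌋ with har
  have harval : ∀ m ∈ poles, ar ((m : ℝ)) = a m := by
    intro m _; simp [har]
  have hsum_eq : ∀ c : ℝ, (∑ x ∈ rpoles, ar x / (c - x)) = ∑ m ∈ poles, a m / (c - m) := by
    intro c
    rw [hrp, Finset.sum_image hcastinj]
    exact Finset.sum_congr rfl fun m hm => by rw [harval m hm]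
  have hrne : rpoles.Nonempty := hne.image _
  have har_pos : ∀ x ∈ rpoles, 0 < ar x := by
    intro x hx
    obtain ⟨m, hm, rfl⟩ := Finset.mem_image.mp hx
    rw [harval m hm]; exact ha m hm
  obtain ⟨Y, hYspec, hYsum⟩ := boole_roots rpoles hrne ar har_pos lam hlam
  have hg_eq : (∑ x ∈ rpoles, ar x) = ∑ m ∈ poles, a m := by
    rw [hrp, Finset.sum_image hcastinj]
    exact Finset.sum_congr rfl fun m hm => harval m hm
  set g := ∑ m ∈ poles, a m with hg
  -- the assignment of each bad point to the nearest pole on its left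
  set β : ℤ → ℤ := fun n =>
    if h : (poles.filter fun m => m ≤ n).Nonempty then (poles.filter fun m => m ≤ n).max' h
    else 0 with hβ
  have hbadne : ∀ n ∈ Bad, (poles.filter fun m => m ≤ n).Nonempty := by
    intro n hn
    rw [hBad, Finset.mem_filter] at hn
    by_contra hemp
    rw [Finset.not_nonempty_iff_eq_empty, Finset.filter_eq_empty_iff] at hemp
    have hle : (∑ m ∈ poles, a m / ((n : ℝ) + 1/2 - m)) ≤ 0 := by
      apply Finset.sum_nonpos
      intro m hm
      have h1 : n < m := lt_of_not_ge (hemp hm)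
      have h2 : (n : ℝ) + 1/2 - m < 0 := by
        have : (n : ℝ) + 1 ≤ m := by exact_mod_cast h1
        linarith
      exact le_of_lt (div_neg_of_pos_of_neg (ha m hm) h2)
    linarith [hn.2]
  have hβmem : ∀ n ∈ Bad, β n ∈ poles ∧ β n ≤ n ∧ ∀ k ∈ poles, β n < k → n + 1 ≤ k := by
    intro n hn
    have h := hbadne n hn
    rw [hβ]
    simp only [dif_pos h]
    set b := (poles.filter fun m => m ≤ n).max' h with hb
    have hbmem := Finset.max'_mem (poles.filter fun m => m ≤ n) h
    rw [Finset.mem_filter] at hbmem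
    refine ⟨hbmem.1, hbmem.2, ?_⟩
    intro k hk hbk
    by_contra hc
    push_neg at hc
    have : k ≤ b := Finset.le_max' _ k (Finset.mem_filter.mpr ⟨hk, by omega⟩)
    omega
  -- each bad point is below the root of its pole
  have hkey : ∀ n ∈ Bad, (n : ℝ) + 1/2 ≤ Y ((β n : ℤ) : ℝ) := by
    intro n hn
    obtain ⟨hbp, hbn, hbk⟩ := hβmem n hn
    set b := β n with hbdef
    have hbrp : ((b : ℤ) : ℝ) ∈ rpoles := Finset.mem_image_of_mem _ hbp
    obtain ⟨hby, hbgap, hbF⟩ := hYspec _ hbrp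
    by_contra hcon
    push_neg at hcon
    -- F strictly decreasing past the root
    have hstrict : (∑ x ∈ rpoles, ar x / (((n:ℝ) + 1/2) - x))
        < ∑ x ∈ rpoles, ar x / (Y ((b : ℤ) : ℝ) - x) := by
      apply Finset.sum_lt_sum_of_nonempty hrne
      intro x hx
      obtain ⟨m, hm, rfl⟩ := Finset.mem_image.mp hx
      rcases le_or_gt m b with hmb | hmb
      · -- pole on the left
        have h1 : (m : ℝ) ≤ b := by exact_mod_cast hmb
        have h2 : (0:ℝ) < Y ((b : ℤ) : ℝ) - m := by linarith
        exact div_lt_div_of_pos_left (har_pos _ hx) h2 (by linarith)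
      · -- pole on the right
        have h1 : (n : ℤ) + 1 ≤ m := hbk m hm hmb
        have h2 : (n : ℝ) + 1 ≤ m := by exact_mod_cast h1
        have h3 : (m : ℝ) ∈ rpoles := hx
        have h4 : Y ((b : ℤ) : ℝ) < m := hbgap _ h3 (by exact_mod_cast hmb)
        exact div_lt_div_neg_helper _ _ _ (har_pos _ hx) (by linarith) (by linarith)
    rw [hbF] at hstrict
    rw [hBad, Finset.mem_filter] at hn
    rw [hsum_eq ((n:ℝ) + 1/2)] at hstrict
    linarith [hn.2]
  -- count fibers
  have hcount : (Bad.card : ℝ) ≤ 2 * ∑ m ∈ poles, (Y ((m : ℤ) : ℝ) - (m : ℝ)) := by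
    have hfib := Finset.card_eq_sum_card_fiberwise (fun n hn => (hβmem n hn).1)
      (s := Bad) (t := poles) (f := β)
    rw [hfib]
    push_cast
    rw [Finset.mul_sum]
    apply Finset.sum_le_sum
    intro b hb
    have hbrp : ((b : ℤ) : ℝ) ∈ rpoles := Finset.mem_image_of_mem _ hb
    have hby := (hYspec _ hbrp).1
    rcases (Bad.filter fun n => β n = b).eq_empty_or_nonempty with hemp | ⟨n₀, hn₀⟩
    · rw [hemp]
      simp
      linarith
    · have hn₀' := Finset.mem_filter.mp hn₀
      have hn₀Bad := hn₀'.1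
      have hβn₀ := hn₀'.2
      have hkey₀ := hkey n₀ hn₀Bad
      rw [hβn₀] at hkey₀
      have hbn₀ : b ≤ n₀ := by
        have := (hβmem n₀ hn₀Bad).2.1
        rwa [hβn₀] at this
      have hhalf : (1:ℝ)/2 ≤ Y ((b : ℤ) : ℝ) - b := by
        have : (b : ℝ) ≤ n₀ := by exact_mod_cast hbn₀
        linarith
      -- fiber is inside an integer interval
      have hsub : (Bad.filter fun n => β n = b) ⊆ Finset.Icc b ⌊Y ((b : ℤ) : ℝ) - 1/2⌋ := by
        intro n hn
        have hn' := Finset.mem_filter.mp hn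
        have h1 := (hβmem n hn'.1).2.1
        rw [hn'.2] at h1
        have h2 := hkey n hn'.1
        rw [hn'.2] at h2
        rw [Finset.mem_Icc]
        exact ⟨h1, Int.le_floor.mpr (by linarith)⟩
      have hcard := Finset.card_le_card hsub
      have hIcc : ((Finset.Icc b ⌊Y ((b : ℤ) : ℝ) - 1/2⌋).card : ℝ)
          ≤ Y ((b : ℤ) : ℝ) - b + 1/2 := by
        rw [Int.card_Icc]
        have hint : ((⌊Y ((b : ℤ) : ℝ) - 1/2⌋ + 1 - b : ℤ) : ℝ)
            ≤ Y ((b : ℤ) : ℝ) - (b : ℝ) + 1/2 := by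
          push_cast
          linarith [Int.floor_le (Y ((b : ℤ) : ℝ) - 1/2)]
        rcases le_or_gt (⌊Y ((b : ℤ) : ℝ) - 1/2⌋ + 1 - b) 0 with h | h
        · rw [Int.toNat_of_nonpos h]
          push_cast
          linarith
        · have hto := Int.toNat_of_nonneg h.le
          have hto' : (((⌊Y ((b : ℤ) : ℝ) - 1/2⌋ + 1 - b).toNat : ℕ) : ℝ)
              = ((⌊Y ((b : ℤ) : ℝ) - 1/2⌋ + 1 - b : ℤ) : ℝ) := by
            exact_mod_cast hto
          rw [hto']
          exact hint
      calc ((Bad.filter fun n => β n = b).card : ℝ)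
          ≤ ((Finset.Icc b ⌊Y ((b : ℤ) : ℝ) - 1/2⌋).card : ℝ) := by exact_mod_cast hcard
        _ ≤ Y ((b : ℤ) : ℝ) - b + 1/2 := hIcc
        _ ≤ 2 * (Y ((b : ℤ) : ℝ) - b) := by linarith
  -- total displacement of the roots
  have hdisp : (∑ m ∈ poles, (Y ((m : ℤ) : ℝ) - (m : ℝ))) = g / lam := by
    have h1 : (∑ x ∈ rpoles, Y x) = ∑ m ∈ poles, Y ((m : ℤ) : ℝ) := by
      rw [hrp, Finset.sum_image hcastinj]
    have h2 : (∑ x ∈ rpoles, x) = ∑ m ∈ poles, ((m : ℤ) : ℝ) := by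
      rw [hrp, Finset.sum_image hcastinj]
    rw [Finset.sum_sub_distrib, ← h1, ← h2, hYsum, hg_eq]
    ring
  rw [hdisp] at hcount
  calc ((Bad.card : ℕ) : ℝ) ≤ 2 * (g / lam) := hcount
    _ = 2 * g / lam := by ring

open Finset

lemma half_bound (z : ℤ) : (1:ℝ)/2 ≤ |(z:ℝ) + 1/2| := by
  rcases le_or_gt 0 z with h | h
  · have : (0:ℝ) ≤ z := by exact_mod_cast h
    rw [abs_of_nonneg (by linarith)]
    linarith
  · have hz : z ≤ -1 := by omega
    have : (z:ℝ) ≤ -1 := by exact_mod_cast hz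
    rw [abs_of_nonpos (by linarith)]
    linarith

lemma half_dist (n m : ℤ) : (1:ℝ)/2 ≤ |(m:ℝ) - ((n:ℝ) + 1/2)| := by
  have h := half_bound (n - m)
  have heq : |((n - m : ℤ) : ℝ) + 1/2| = |(m:ℝ) - ((n:ℝ) + 1/2)| := by
    rw [← abs_neg]
    congr 1
    push_cast
    ring
  linarith [heq ▸ h]

lemma sum_inv_sq_nat (M : ℕ) :
    (∑ k ∈ Finset.range (M + 1), 1 / (((k:ℕ):ℝ) + 1/2)^2) ≤ 5 - 1/((M:ℝ) + 1) := by
  induction M with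
  | zero => norm_num
  | succ M ih =>
    rw [Finset.sum_range_succ]
    have h1 : (1:ℝ) / (((M+1:ℕ):ℝ) + 1/2)^2 ≤ 1/((M:ℝ)+1) - 1/((M:ℝ)+2) := by
      push_cast
      rw [div_sub_div _ _ (by positivity) (by positivity)]
      rw [div_le_div_iff₀ (by positivity) (by positivity)]
      ring_nf
      nlinarith [sq_nonneg ((M:ℝ))]
    push_cast at ih h1 ⊢
    have h2 : (M:ℝ) + 1 + 1 = (M:ℝ) + 2 := by ring
    rw [h2]
    linarith

lemma sum_inv_sq_natset (S : Finset ℕ) :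
    (∑ k ∈ S, 1 / (((k:ℕ):ℝ) + 1/2)^2) ≤ 5 := by
  rcases S.eq_empty_or_nonempty with rfl | hS
  · simp
  · set M := S.max' hS
    have hsub : S ⊆ Finset.range (M + 1) := by
      intro k hk
      rw [Finset.mem_range]
      have := Finset.le_max' S k hk
      omega
    calc (∑ k ∈ S, 1 / (((k:ℕ):ℝ) + 1/2)^2)
        ≤ ∑ k ∈ Finset.range (M+1), 1 / (((k:ℕ):ℝ) + 1/2)^2 := by
          apply Finset.sum_le_sum_of_subset_of_nonneg hsub
          intro k _ _
          positivity
      _ ≤ 5 - 1/((M:ℝ)+1) := sum_inv_sq_nat M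
      _ ≤ 5 := by
          have h : (0:ℝ) < (M:ℝ) + 1 := by positivity
          linarith [one_div_pos.mpr h]

lemma sum_inv_sq_core (F : Finset ℤ) :
    (∑ j ∈ F, 1 / (((j:ℤ):ℝ) + 1/2)^2) ≤ 10 := by
  classical
  have hsplit : F = (F.filter fun j => 0 ≤ j) ∪ (F.filter fun j => j < 0) := by
    ext j
    simp only [Finset.mem_union, Finset.mem_filter]
    constructor
    · intro hj; rcases le_or_gt 0 j with h | h
      · exact Or.inl ⟨hj, h⟩
      · exact Or.inr ⟨hj, h⟩
    · rintro (⟨hj, _⟩ | ⟨hj, _⟩) <;> exact hj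
  have hdisj : Disjoint (F.filter fun j => 0 ≤ j) (F.filter fun j => j < 0) := by
    rw [Finset.disjoint_left]
    intro j h1 h2
    simp only [Finset.mem_filter] at h1 h2
    omega
  rw [hsplit, Finset.sum_union hdisj]
  have h1 : (∑ j ∈ F.filter fun j => 0 ≤ j, 1 / (((j:ℤ):ℝ) + 1/2)^2) ≤ 5 := by
    have hinj : ∀ x ∈ F.filter (fun j => 0 ≤ j), ∀ y ∈ F.filter (fun j => 0 ≤ j),
        x.toNat = y.toNat → x = y := by
      intro x hx y hy hxy
      simp only [Finset.mem_filter] at hx hy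
      omega
    calc (∑ j ∈ F.filter fun j => 0 ≤ j, 1 / (((j:ℤ):ℝ) + 1/2)^2)
        = ∑ j ∈ F.filter fun j => 0 ≤ j, 1 / (((j.toNat:ℕ):ℝ) + 1/2)^2 := by
          apply Finset.sum_congr rfl
          intro j hj
          simp only [Finset.mem_filter] at hj
          have hcast : ((j.toNat : ℕ) : ℝ) = ((j:ℤ):ℝ) := by
            exact_mod_cast Int.toNat_of_nonneg hj.2
          rw [hcast]
      _ = ∑ k ∈ (F.filter fun j => 0 ≤ j).image Int.toNat, 1 / (((k:ℕ):ℝ) + 1/2)^2 :=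
          (Finset.sum_image (f := fun k : ℕ => 1 / (((k:ℕ):ℝ) + 1/2)^2) hinj).symm
      _ ≤ 5 := sum_inv_sq_natset _
  have h2 : (∑ j ∈ F.filter fun j => j < 0, 1 / (((j:ℤ):ℝ) + 1/2)^2) ≤ 5 := by
    have hinj : ∀ x ∈ F.filter (fun j => j < 0), ∀ y ∈ F.filter (fun j => j < 0),
        (-1-x).toNat = (-1-y).toNat → x = y := by
      intro x hx y hy hxy
      simp only [Finset.mem_filter] at hx hy
      omega
    calc (∑ j ∈ F.filter fun j => j < 0, 1 / (((j:ℤ):ℝ) + 1/2)^2)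
        = ∑ j ∈ F.filter fun j => j < 0, 1 / ((((-1-j).toNat:ℕ):ℝ) + 1/2)^2 := by
          apply Finset.sum_congr rfl
          intro j hj
          simp only [Finset.mem_filter] at hj
          have h0 : (0:ℤ) ≤ -1 - j := by omega
          have : (((-1-j).toNat : ℕ) : ℝ) = ((-1 - j : ℤ) : ℝ) := by
            exact_mod_cast Int.toNat_of_nonneg h0
          rw [this]
          push_cast
          ring_nf
      _ = ∑ k ∈ (F.filter fun j => j < 0).image (fun j => (-1-j).toNat),
            1 / (((k:ℕ):ℝ) + 1/2)^2 :=
          (Finset.sum_image (f := fun k : ℕ => 1 / (((k:ℕ):ℝ) + 1/2)^2) hinj).symm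
      _ ≤ 5 := sum_inv_sq_natset _
  linarith

lemma sum_inv_sq_shift (F : Finset ℤ) (m : ℤ) :
    (∑ n ∈ F, 1 / (((n:ℤ):ℝ) + 1/2 - (m:ℝ))^2) ≤ 10 := by
  classical
  have hinj : ∀ x ∈ F, ∀ y ∈ F, x - m = y - m → x = y := by
    intro x _ y _ h; omega
  calc (∑ n ∈ F, 1 / (((n:ℤ):ℝ) + 1/2 - (m:ℝ))^2)
      = ∑ n ∈ F, 1 / ((((n - m : ℤ)):ℝ) + 1/2)^2 := by
        apply Finset.sum_congr rfl
        intro n _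
        congr 2
        push_cast
        ring
    _ = ∑ j ∈ F.image (fun n => n - m), 1 / (((j:ℤ):ℝ) + 1/2)^2 :=
        (Finset.sum_image (f := fun j : ℤ => 1 / (((j:ℤ):ℝ) + 1/2)^2) hinj).symm
    _ ≤ 10 := sum_inv_sq_core _

open Finset

lemma key_dist_bound (c : ℝ) (m : ℤ) (hd : (1:ℝ)/2 ≤ |(m:ℝ) - c|) :
    |(m:ℝ)| + 1 ≤ 8 * (|c| + 2) * |(m:ℝ) - c|
      ∧ |(m:ℝ)| + 1 ≤ 8 * (|c| + 2) * ((m:ℝ) - c)^2 := by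
  have habsc : 0 ≤ |c| := abs_nonneg c
  have habsm : 0 ≤ |(m:ℝ)| := abs_nonneg _
  have hsq : ((m:ℝ) - c)^2 = |(m:ℝ) - c|^2 := (sq_abs _).symm
  rcases le_or_gt (|(m:ℝ)|) (2*|c| + 2) with hs | hl
  · have hq : (1:ℝ)/4 ≤ |(m:ℝ) - c|^2 := by nlinarith [hd]
    constructor
    · have h8 : 4*(|c|+2) ≤ 8 * (|c| + 2) * |(m:ℝ) - c| := by nlinarith [hd, habsc]
      linarith
    · have h8 : 2*(|c|+2) ≤ 8 * (|c| + 2) * |(m:ℝ) - c|^2 := by nlinarith [hq, habsc]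
      rw [hsq]
      linarith
  · have h5 : |(m:ℝ)| - |c| ≤ |(m:ℝ) - c| := by
      have := abs_sub_abs_le_abs_sub (m:ℝ) c
      linarith
    have h6 : |(m:ℝ)|/2 + 1 ≤ |(m:ℝ) - c| := by linarith
    have h7 : (1:ℝ) ≤ |(m:ℝ) - c| := by linarith
    have h8 : |(m:ℝ) - c| ≤ |(m:ℝ) - c|^2 := by nlinarith [h7]
    constructor
    · nlinarith [h6, habsc, habsm]
    · rw [hsq]
      nlinarith [h6, h8, habsc, habsm]

lemma summable_div_sq (G : ℤ → ℝ)
    (hGsum : Summable fun n : ℤ => G n ^ 2 / (|(n : ℝ)| + 1)) (c : ℝ)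
    (p : ℤ → Prop) [DecidablePred p] (hp : ∀ m : ℤ, ¬ p m → 1/2 ≤ |(m:ℝ) - c|) :
    Summable fun m : ℤ => if p m then 0 else G m ^ 2 / ((m:ℝ) - c)^2 := by
  set K := 8 * (|c| + 2) with hK
  have hKpos : 0 < K := by positivity
  apply Summable.of_nonneg_of_le ?_ ?_ (hGsum.mul_left K)
  · intro m
    by_cases h : p m
    · simp [h]
    · simp only [if_neg h]
      positivity
  · intro m
    by_cases h : p m
    · simp only [if_pos h]
      positivity
    · simp only [if_neg h]
      have hd := hp m h
      have hkey := (key_dist_bound c m hd).2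
      have hne : (0:ℝ) < ((m:ℝ) - c)^2 := by nlinarith [sq_abs ((m:ℝ) - c)]
      have habs : (0:ℝ) < |(m:ℝ)| + 1 := by positivity
      rw [div_le_iff₀ hne]
      have h3 : K * (G m ^ 2 / (|(m:ℝ)| + 1)) * ((m:ℝ) - c)^2
          = (G m ^ 2 * (8 * (|c| + 2) * ((m:ℝ) - c)^2)) / (|(m:ℝ)| + 1) := by
        rw [hK]; ring
      rw [h3, le_div_iff₀ habs]
      exact mul_le_mul_of_nonneg_left hkey (sq_nonneg (G m))

lemma summable_div_abs (G : ℤ → ℝ)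
    (hGsum : Summable fun n : ℤ => G n ^ 2 / (|(n : ℝ)| + 1)) (c : ℝ)
    (p : ℤ → Prop) [DecidablePred p] (hp : ∀ m : ℤ, ¬ p m → 1/2 ≤ |(m:ℝ) - c|) :
    Summable fun m : ℤ => if p m then 0 else G m ^ 2 / |(m:ℝ) - c| := by
  set K := 8 * (|c| + 2) with hK
  have hKpos : 0 < K := by positivity
  apply Summable.of_nonneg_of_le ?_ ?_ (hGsum.mul_left K)
  · intro m
    by_cases h : p m
    · simp [h]
    · simp only [if_neg h]
      positivity
  · intro m
    by_cases h : p m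
    · simp only [if_pos h]
      positivity
    · simp only [if_neg h]
      have hd := hp m h
      have hkey := (key_dist_bound c m hd).1
      have hne : (0:ℝ) < |(m:ℝ) - c| := by linarith
      have habs : (0:ℝ) < |(m:ℝ)| + 1 := by positivity
      rw [div_le_iff₀ hne]
      have h3 : K * (G m ^ 2 / (|(m:ℝ)| + 1)) * |(m:ℝ) - c|
          = (G m ^ 2 * (8 * (|c| + 2) * |(m:ℝ) - c|)) / (|(m:ℝ)| + 1) := by
        rw [hK]; ring
      rw [h3, le_div_iff₀ habs]
      exact mul_le_mul_of_nonneg_left hkey (sq_nonneg (G m))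

lemma summable_div_signed (G : ℤ → ℝ)
    (hGsum : Summable fun n : ℤ => G n ^ 2 / (|(n : ℝ)| + 1)) (c : ℝ)
    (p : ℤ → Prop) [DecidablePred p] (hp : ∀ m : ℤ, ¬ p m → 1/2 ≤ |(m:ℝ) - c|) :
    Summable fun m : ℤ => if p m then 0 else G m ^ 2 / ((m:ℝ) - c) := by
  rw [← summable_abs_iff]
  have heq : (fun m : ℤ => |if p m then 0 else G m ^ 2 / ((m:ℝ) - c)|)
      = fun m : ℤ => if p m then 0 else G m ^ 2 / |(m:ℝ) - c| := by
    funext m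
    by_cases h : p m
    · simp [h]
    · simp only [if_neg h, abs_div, abs_of_nonneg (sq_nonneg (G m))]
  rw [heq]
  exact summable_div_abs G hGsum c p hp

lemma tail_bounds (R D : ℝ) (hD : 3 ≤ D) (n m : ℤ)
    (hn : (n:ℝ) ∈ Set.Icc (R - D/2) (R + D/2))
    (hm : (m:ℝ) ∉ Set.Icc (R - D) (R + D)) :
    1 ≤ |(m:ℝ) - ((n:ℝ) + 1/2)| ∧ |(m:ℝ) - R| ≤ 3 * |(m:ℝ) - ((n:ℝ) + 1/2)|
      ∧ D ≤ |(m:ℝ) - R| := by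
  obtain ⟨hn1, hn2⟩ := hn
  rw [Set.mem_Icc, not_and_or, not_le, not_le] at hm
  rcases hm with h | h
  · have hA : |(m:ℝ) - R| = R - m := by
      rw [abs_of_neg (by linarith : (m:ℝ) - R < 0)]
      ring
    have hB : |(m:ℝ) - ((n:ℝ) + 1/2)| = (n:ℝ) + 1/2 - m := by
      rw [abs_of_neg (by linarith : (m:ℝ) - ((n:ℝ) + 1/2) < 0)]
      ring
    rw [hA, hB]
    refine ⟨by linarith, by linarith, by linarith⟩
  · have hA : |(m:ℝ) - R| = (m:ℝ) - R := abs_of_pos (by linarith)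
    have hB : |(m:ℝ) - ((n:ℝ) + 1/2)| = (m:ℝ) - ((n:ℝ) + 1/2) :=
      abs_of_pos (by linarith)
    rw [hA, hB]
    refine ⟨by linarith, by linarith, by linarith⟩

lemma div_bounds (G R D : ℝ) (hD : 3 ≤ D) (x y : ℝ)
    (h1 : 1 ≤ |x|) (h2 : |y| ≤ 3 * |x|) (h3 : D ≤ |y|) :
    G^2 / x^2 ≤ 3 * (G^2 / |y|) ∧ G^2 / |x| ≤ 3 * (G^2 / |y|) := by
  have hx : (0:ℝ) < |x| := by linarith
  have hy : (0:ℝ) < |y| := by linarith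
  have hsq : |x| ≤ x^2 := by nlinarith [sq_abs x]
  have hxx : (0:ℝ) < x^2 := by nlinarith
  have hstep : G^2 / |x| ≤ 3 * (G^2 / |y|) := by
    have hq : |y| / 3 ≤ |x| := by linarith
    have hq2 : (0:ℝ) < |y| / 3 := by linarith
    calc G^2 / |x| ≤ G^2 / (|y| / 3) :=
          div_le_div_of_nonneg_left (sq_nonneg G) hq2 hq
      _ = 3 * (G^2 / |y|) := by
          field_simp
  constructor
  · calc G^2 / x^2 ≤ G^2 / |x| :=
        div_le_div_of_nonneg_left (sq_nonneg G) hx hsq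
      _ ≤ 3 * (G^2 / |y|) := hstep
  · exact hstep

open scoped Classical

/-- **Lemma (good points in `J_k`).**
Under a lacunary system of intervals `I_k = [ρ_k - d_k, ρ_k + d_k]` with `3 ≤ d_k ≤ 0.1ρ_k`,
for `G : ℤ → ℝ` with `∑ G(n)²/(|n|+1) < ∞`, `g_k = ∑_{n ∈ I_k} G(n)²` and
`∑_{n ∉ I_k} G(n)²/|n - ρ_k| ≤ C g_k/d_k`, there is `C' > 0` such that every `k` admits a
set `N_k ⊆ J_k ∩ ℤ = [ρ_k - d_k/2, ρ_k + d_k/2] ∩ ℤ` with `|N_k| ≥ d_k/2` and, for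
`n ∈ N_k`, `∑_m G(m)²/(n + 1/2 - m)² ≤ C' g_k/d_k` and `|∑_m G(m)²/(m - n - 1/2)| ≤ C' g_k/d_k`. -/
theorem stmt10 (ρ d : ℕ → ℝ)
    (hρpos : ∀ k, 0 < ρ k) (hρlac : ∀ k, 2 * ρ k ≤ ρ (k + 1))
    (hd3 : ∀ k, 3 ≤ d k) (hdsmall : ∀ k, d k ≤ 0.1 * ρ k)
    (G : ℤ → ℝ)
    (hGsum : Summable fun n : ℤ => G n ^ 2 / (|(n : ℝ)| + 1))
    (g : ℕ → ℝ)
    (hg : ∀ k, g k = ∑ᶠ n : ℤ,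
      if (n : ℝ) ∈ Set.Icc (ρ k - d k) (ρ k + d k) then G n ^ 2 else 0)
    (C : ℝ) (hC : 0 < C)
    (h1 : ∀ k, (∑' n : ℤ, if (n : ℝ) ∈ Set.Icc (ρ k - d k) (ρ k + d k) then 0
      else G n ^ 2 / |(n : ℝ) - ρ k|) ≤ C * g k / d k) :
    ∃ C' > (0:ℝ), ∀ k, ∃ N : Finset ℤ,
      (∀ n ∈ N, (n : ℝ) ∈ Set.Icc (ρ k - d k / 2) (ρ k + d k / 2)) ∧
      d k / 2 ≤ (N.card : ℝ) ∧
      ∀ n ∈ N,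
        (∑' m : ℤ, G m ^ 2 / ((n : ℝ) + 1 / 2 - m) ^ 2) ≤ C' * g k / d k ∧
        |∑' m : ℤ, G m ^ 2 / ((m : ℝ) - n - 1 / 2)| ≤ C' * g k / d k := by
  classical
  refine ⟨112 + 3 * C, by linarith, fun k => ?_⟩
  have hD3 : (3:ℝ) ≤ d k := hd3 k
  have hDpos : (0:ℝ) < d k := by linarith
  set R := ρ k with hRdef
  set D := d k with hDdef
  set IZ : Finset ℤ := Finset.Icc ⌈R - D⌉ ⌊R + D⌋ with hIZdef
  set JZ : Finset ℤ := Finset.Icc ⌈R - D/2⌉ ⌊R + D/2⌋ with hJZdef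
  have hIZ : ∀ m : ℤ, m ∈ IZ ↔ (m:ℝ) ∈ Set.Icc (R - D) (R + D) := by
    intro m
    rw [hIZdef, Finset.mem_Icc, Set.mem_Icc, Int.ceil_le, Int.le_floor]
  have hJZ : ∀ n : ℤ, n ∈ JZ ↔ (n:ℝ) ∈ Set.Icc (R - D/2) (R + D/2) := by
    intro n
    rw [hJZdef, Finset.mem_Icc, Set.mem_Icc, Int.ceil_le, Int.le_floor]
  -- g k as a finite sum
  have hgksum : g k = ∑ m ∈ IZ, G m ^ 2 := by
    have hsupp : (Function.support fun m : ℤ =>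
        if (m:ℝ) ∈ Set.Icc (R - D) (R + D) then G m ^ 2 else 0) ⊆ ↑IZ := by
      intro m hm
      rw [Function.mem_support] at hm
      by_contra hmem
      apply hm
      rw [if_neg (fun hc => hmem ((hIZ m).mpr hc))]
    rw [hg k, finsum_eq_sum_of_support_subset _ hsupp]
    exact Finset.sum_congr rfl fun m hm => if_pos ((hIZ m).mp hm)
  have hgnn : 0 ≤ g k := by
    rw [hgksum]
    exact Finset.sum_nonneg fun m _ => sq_nonneg _
  set lam := 112 * g k / D with hlam
  have hlamnn : 0 ≤ lam := div_nonneg (by linarith) hDpos.le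
  set Qin : ℤ → ℝ := fun n => ∑ m ∈ IZ, G m ^ 2 / ((m:ℝ) - ((n:ℝ) + 1/2))^2 with hQin
  set Hin : ℤ → ℝ := fun n => ∑ m ∈ IZ, G m ^ 2 / ((m:ℝ) - ((n:ℝ) + 1/2)) with hHin
  set BadQ := JZ.filter (fun n => lam < Qin n) with hBadQdef
  set BadH := JZ.filter (fun n => lam < |Hin n|) with hBadHdef
  set N := JZ \ (BadQ ∪ BadH) with hNdef
  -- cardinality of JZ
  have hJZcard : D - 1 ≤ (JZ.card : ℝ) := by
    have h1' : ((⌈R - D/2⌉ : ℤ) : ℝ) < R - D/2 + 1 := Int.ceil_lt_add_one _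
    have h2' : R + D/2 - 1 < ((⌊R + D/2⌋ : ℤ) : ℝ) := Int.sub_one_lt_floor _
    have h3' : (0:ℤ) ≤ ⌊R + D/2⌋ + 1 - ⌈R - D/2⌉ := by
      have h : (0:ℝ) < ((⌊R + D/2⌋ : ℤ):ℝ) + 1 - ((⌈R - D/2⌉:ℤ):ℝ) := by linarith
      exact_mod_cast h.le
    rw [hJZdef, Int.card_Icc]
    have h4 : (((⌊R + D/2⌋ + 1 - ⌈R - D/2⌉).toNat : ℕ) : ℝ)
        = ((⌊R + D/2⌋ + 1 - ⌈R - D/2⌉ : ℤ) : ℝ) := by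
      exact_mod_cast Int.toNat_of_nonneg h3'
    rw [h4]
    push_cast
    linarith
  -- averaging bound for Qin
  have hQavg : (∑ n ∈ JZ, Qin n) ≤ 10 * g k := by
    rw [hQin]
    calc (∑ n ∈ JZ, ∑ m ∈ IZ, G m ^ 2 / ((m:ℝ) - ((n:ℝ) + 1/2))^2)
        = ∑ m ∈ IZ, ∑ n ∈ JZ, G m ^ 2 / ((m:ℝ) - ((n:ℝ) + 1/2))^2 := Finset.sum_comm
      _ ≤ ∑ m ∈ IZ, G m ^ 2 * 10 := by
          apply Finset.sum_le_sum
          intro m _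
          have heq : ∀ n ∈ JZ, G m ^ 2 / ((m:ℝ) - ((n:ℝ) + 1/2))^2
              = G m ^ 2 * (1/(((n:ℝ) + 1/2 - (m:ℝ))^2)) := by
            intro n _
            rw [mul_one_div]
            congr 1
            ring
          rw [Finset.sum_congr rfl heq, ← Finset.mul_sum]
          exact mul_le_mul_of_nonneg_left (sum_inv_sq_shift JZ m) (sq_nonneg _)
      _ = (∑ m ∈ IZ, G m ^ 2) * 10 := by rw [Finset.sum_mul]
      _ = 10 * g k := by rw [← hgksum]; ring
  have hQnn : ∀ n : ℤ, 0 ≤ Qin n := fun n => Finset.sum_nonneg fun m _ => by positivity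
  have hBadQbound : (BadQ.card : ℝ) * lam ≤ 10 * g k := by
    calc (BadQ.card : ℝ) * lam = ∑ _n ∈ BadQ, lam := by
          rw [Finset.sum_const, nsmul_eq_mul]
      _ ≤ ∑ n ∈ BadQ, Qin n :=
          Finset.sum_le_sum fun n hn => (le_of_lt (Finset.mem_filter.mp hn).2)
      _ ≤ ∑ n ∈ JZ, Qin n :=
          Finset.sum_le_sum_of_subset_of_nonneg (Finset.filter_subset _ _)
            (fun n _ _ => hQnn n)
      _ ≤ 10 * g k := hQavg
  have hGz : g k = 0 → ∀ m ∈ IZ, G m = 0 := by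
    intro h0 m hm
    have hsum0 : (∑ m ∈ IZ, G m ^ 2) = 0 := hgksum.symm.trans h0
    have := (Finset.sum_eq_zero_iff_of_nonneg (fun m _ => sq_nonneg (G m))).mp hsum0 m hm
    exact pow_eq_zero_iff (by norm_num) |>.mp this
  have hgcases : g k = 0 ∨ 0 < g k := by
    rcases eq_or_lt_of_le hgnn with h | h
    · exact Or.inl h.symm
    · exact Or.inr h
  have hBadQcard : (BadQ.card : ℝ) ≤ D / 11 := by
    rcases hgcases with h0 | hpos
    · have hempty : BadQ = ∅ := by
        rw [hBadQdef]
        apply Finset.filter_false_of_mem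
        intro n _
        have hq0 : Qin n = 0 := Finset.sum_eq_zero fun m hm => by
          rw [hGz h0 m hm]; simp
        rw [hq0, hlam, h0]
        simp
      rw [hempty]
      simp
      positivity
    · have h2 : (BadQ.card : ℝ) * 112 * g k ≤ 10 * g k * D := by
        have h3 := mul_le_mul_of_nonneg_right hBadQbound hDpos.le
        calc (BadQ.card:ℝ) * 112 * g k = (BadQ.card:ℝ) * lam * D := by
              rw [hlam]; field_simp
          _ ≤ 10 * g k * D := h3
      nlinarith [h2, hpos, hDpos, (by positivity : (0:ℝ) ≤ (BadQ.card : ℝ))]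
  -- the Hilbert-transform bad set via Boole's inequality
  set poles := IZ.filter (fun m => G m ≠ 0) with hpolesdef
  have hpolespos : ∀ m ∈ poles, 0 < G m ^ 2 := fun m hm => by
    have h := (Finset.mem_filter.mp hm).2
    positivity
  have hpolesum : (∑ m ∈ poles, G m ^ 2) = g k := by
    rw [hpolesdef, Finset.sum_filter_of_ne, ← hgksum]
    intro m _ hne
    intro hGm0
    exact hne (by rw [hGm0]; simp)
  have hHinpoles : ∀ n : ℤ, Hin n = ∑ m ∈ poles, G m ^ 2 / ((m:ℝ) - ((n:ℝ) + 1/2)) := by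
    intro n
    rw [hHin, hpolesdef]
    refine (Finset.sum_filter_of_ne ?_).symm
    intro m _ hne hGm0
    exact hne (by rw [hGm0]; simp)
  have hBadHcard : (BadH.card : ℝ) ≤ D / 14 := by
    rcases hgcases with h0 | hpos
    · have hempty : BadH = ∅ := by
        rw [hBadHdef]
        apply Finset.filter_false_of_mem
        intro n _
        have hq0 : Hin n = 0 := Finset.sum_eq_zero fun m hm => by
          rw [hGz h0 m hm]; simp
        rw [hq0, hlam, h0]
        simp
      rw [hempty]
      simp
      positivity
    · have hlampos : 0 < lam := by rw [hlam]; positivity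
      set Bplus := JZ.filter (fun n : ℤ =>
        lam < ∑ m ∈ poles, G m ^ 2 / ((n:ℝ) + 1/2 - m)) with hBpdef
      have hBpcard : (Bplus.card : ℝ) ≤ 2 * g k / lam := by
        have hb := boole_count poles (fun m => G m ^ 2) hpolespos lam hlampos JZ
        rw [hpolesum] at hb
        exact hb
      set σ : ℤ → ℤ := fun n => -1 - n with hσdef
      have hinjσ : Function.Injective σ := by
        intro x y h
        simp only [hσdef] at h
        omega
      set poles2 := poles.image (fun m : ℤ => -m) with hp2def
      have hp2pos : ∀ m ∈ poles2, 0 < G (-m) ^ 2 := by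
        intro m hm
        obtain ⟨m', hm', rfl⟩ := Finset.mem_image.mp hm
        simp only [neg_neg]
        exact hpolespos m' hm'
      have hp2sum : (∑ m ∈ poles2, G (-m) ^ 2) = g k := by
        rw [hp2def, Finset.sum_image (by intro x _ y _ h; simpa using h)]
        simp only [neg_neg]
        exact hpolesum
      have hBm := boole_count poles2 (fun m => G (-m) ^ 2) hp2pos lam hlampos (JZ.image σ)
      rw [hp2sum] at hBm
      set Bminus := JZ.filter (fun n : ℤ =>
        lam < ∑ m ∈ poles, G m ^ 2 / ((m:ℝ) - ((n:ℝ) + 1/2))) with hBmdef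
      have hBmEq : (JZ.image σ).filter (fun n : ℤ =>
          lam < ∑ m ∈ poles2, G (-m) ^ 2 / ((n:ℝ) + 1/2 - m)) = Bminus.image σ := by
        rw [Finset.filter_image, hBmdef]
        congr 1
        apply Finset.filter_congr
        intro n _
        have heq2 : (∑ m ∈ poles2, G (-m) ^ 2 / (((σ n : ℤ):ℝ) + 1/2 - m))
            = ∑ m ∈ poles, G m ^ 2 / ((m:ℝ) - ((n:ℝ) + 1/2)) := by
          rw [hp2def, Finset.sum_image (by intro x _ y _ h; simpa using h)]
          apply Finset.sum_congr rfl
          intro m _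
          simp only [neg_neg]
          congr 1
          rw [hσdef]
          push_cast
          ring
        rw [heq2]
      have hBmcard : (Bminus.card : ℝ) ≤ 2 * g k / lam := by
        have hcardeq : ((JZ.image σ).filter (fun n : ℤ =>
            lam < ∑ m ∈ poles2, G (-m) ^ 2 / ((n:ℝ) + 1/2 - m))).card = Bminus.card := by
          rw [hBmEq, Finset.card_image_of_injective _ hinjσ]
        calc (Bminus.card : ℝ) = (((JZ.image σ).filter (fun n : ℤ =>
              lam < ∑ m ∈ poles2, G (-m) ^ 2 / ((n:ℝ) + 1/2 - m))).card : ℝ) := by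
              rw [hcardeq]
          _ ≤ 2 * g k / lam := hBm
      have hsubH : BadH ⊆ Bplus ∪ Bminus := by
        intro n hn
        obtain ⟨hnJ, hnabs⟩ := Finset.mem_filter.mp hn
        rw [hHinpoles n] at hnabs
        rcases le_or_gt 0 (∑ m ∈ poles, G m ^ 2 / ((m:ℝ) - ((n:ℝ) + 1/2))) with hsgn | hsgn
        · rw [abs_of_nonneg hsgn] at hnabs
          exact Finset.mem_union_right _ (Finset.mem_filter.mpr ⟨hnJ, hnabs⟩)
        · rw [abs_of_neg hsgn] at hnabs
          have hflip : -(∑ m ∈ poles, G m ^ 2 / ((m:ℝ) - ((n:ℝ) + 1/2)))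
              = ∑ m ∈ poles, G m ^ 2 / ((n:ℝ) + 1/2 - m) := by
            rw [← Finset.sum_neg_distrib]
            apply Finset.sum_congr rfl
            intro m _
            rw [← div_neg]
            congr 1
            ring
          rw [hflip] at hnabs
          exact Finset.mem_union_left _ (Finset.mem_filter.mpr ⟨hnJ, hnabs⟩)
      have hcardH : (BadH.card : ℝ) ≤ 4 * g k / lam := by
        have hc1 : BadH.card ≤ Bplus.card + Bminus.card :=
          le_trans (Finset.card_le_card hsubH) (Finset.card_union_le _ _)
        have hc2 : (BadH.card : ℝ) ≤ (Bplus.card : ℝ) + (Bminus.card : ℝ) := by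
          exact_mod_cast hc1
        calc (BadH.card : ℝ) ≤ (Bplus.card : ℝ) + (Bminus.card : ℝ) := hc2
          _ ≤ 2 * g k / lam + 2 * g k / lam := add_le_add hBpcard hBmcard
          _ = 4 * g k / lam := by ring
      have hlamval : 4 * g k / lam = D / 28 := by
        rw [hlam]
        field_simp
        ring
      rw [hlamval] at hcardH
      linarith
  -- size of the good set
  have hNcard : D / 2 ≤ (N.card : ℝ) := by
    have hsub : JZ ⊆ N ∪ (BadQ ∪ BadH) := by
      intro n hn
      by_cases h : n ∈ BadQ ∪ BadH
      · exact Finset.mem_union_right _ h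
      · exact Finset.mem_union_left _ (Finset.mem_sdiff.mpr ⟨hn, h⟩)
    have hc1 : JZ.card ≤ N.card + (BadQ.card + BadH.card) :=
      le_trans (Finset.card_le_card hsub)
        (le_trans (Finset.card_union_le _ _)
          (add_le_add_right (Finset.card_union_le _ _) _))
    have hc2 : (JZ.card : ℝ) ≤ (N.card : ℝ) + ((BadQ.card : ℝ) + (BadH.card : ℝ)) := by
      exact_mod_cast hc1
    linarith
  refine ⟨N, ?_, hNcard, ?_⟩
  · intro n hn
    exact (hJZ n).mp (Finset.mem_sdiff.mp hn).1
  · intro n hn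
    obtain ⟨hnJZ, hnbad⟩ := Finset.mem_sdiff.mp hn
    rw [Finset.mem_union, not_or] at hnbad
    obtain ⟨hnQ, hnH⟩ := hnbad
    have hQle : Qin n ≤ lam := by
      by_contra h
      push_neg at h
      exact hnQ (Finset.mem_filter.mpr ⟨hnJZ, h⟩)
    have hHle : |Hin n| ≤ lam := by
      by_contra h
      push_neg at h
      exact hnH (Finset.mem_filter.mpr ⟨hnJZ, h⟩)
    have hnIcc := (hJZ n).mp hnJZ
    have hdist : ∀ m : ℤ, 1/2 ≤ |(m:ℝ) - ((n:ℝ) + 1/2)| := half_dist n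
    have hdistR : ∀ m : ℤ, ¬ ((m:ℝ) ∈ Set.Icc (R - D) (R + D)) → 1/2 ≤ |(m:ℝ) - R| := by
      intro m hm
      have := (tail_bounds R D hD3 n m hnIcc hm).2.2
      linarith
    -- summability facts
    have hS1 : Summable (fun m : ℤ => if (m:ℝ) ∈ Set.Icc (R - D) (R + D) then 0
        else G m ^ 2 / (((m:ℝ) - ((n:ℝ) + 1/2))^2)) :=
      summable_div_sq G hGsum _ _ (fun m _ => hdist m)
    have hS2 : Summable (fun m : ℤ => if (m:ℝ) ∈ Set.Icc (R - D) (R + D)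
        then G m ^ 2 / (((m:ℝ) - ((n:ℝ) + 1/2))^2) else 0) := by
      apply summable_of_ne_finset_zero (s := IZ)
      intro m hm
      rw [if_neg (fun hc => hm ((hIZ m).mpr hc))]
    have hS3 : Summable (fun m : ℤ => if (m:ℝ) ∈ Set.Icc (R - D) (R + D) then 0
        else G m ^ 2 / |(m:ℝ) - R|) :=
      summable_div_abs G hGsum _ _ hdistR
    have hS4 : Summable (fun m : ℤ => if (m:ℝ) ∈ Set.Icc (R - D) (R + D) then 0
        else G m ^ 2 / |(m:ℝ) - ((n:ℝ) + 1/2)|) :=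
      summable_div_abs G hGsum _ _ (fun m _ => hdist m)
    have hS5 : Summable (fun m : ℤ => if (m:ℝ) ∈ Set.Icc (R - D) (R + D) then 0
        else G m ^ 2 / ((m:ℝ) - ((n:ℝ) + 1/2))) :=
      summable_div_signed G hGsum _ _ (fun m _ => hdist m)
    have hS6 : Summable (fun m : ℤ => if (m:ℝ) ∈ Set.Icc (R - D) (R + D)
        then G m ^ 2 / ((m:ℝ) - ((n:ℝ) + 1/2)) else 0) := by
      apply summable_of_ne_finset_zero (s := IZ)
      intro m hm
      rw [if_neg (fun hc => hm ((hIZ m).mpr hc))]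
    -- tail bounds
    have htailQ : (∑' m : ℤ, (if (m:ℝ) ∈ Set.Icc (R - D) (R + D) then 0
        else G m ^ 2 / (((m:ℝ) - ((n:ℝ) + 1/2))^2))) ≤ 3 * (C * g k / D) := by
      calc (∑' m : ℤ, (if (m:ℝ) ∈ Set.Icc (R - D) (R + D) then 0
            else G m ^ 2 / (((m:ℝ) - ((n:ℝ) + 1/2))^2)))
          ≤ ∑' m : ℤ, 3 * (if (m:ℝ) ∈ Set.Icc (R - D) (R + D) then 0
            else G m ^ 2 / |(m:ℝ) - R|) := by
            apply Summable.tsum_le_tsum _ hS1 (hS3.mul_left 3)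
            intro m
            by_cases hm : (m:ℝ) ∈ Set.Icc (R - D) (R + D)
            · simp [hm]
            · rw [if_neg hm, if_neg hm]
              obtain ⟨hb1, hb2, hb3⟩ := tail_bounds R D hD3 n m hnIcc hm
              exact (div_bounds (G m) R D hD3 _ _ hb1 hb2 hb3).1
        _ = 3 * ∑' m : ℤ, (if (m:ℝ) ∈ Set.Icc (R - D) (R + D) then 0
            else G m ^ 2 / |(m:ℝ) - R|) := tsum_mul_left
        _ ≤ 3 * (C * g k / D) := by
            have := h1 k
            apply mul_le_mul_of_nonneg_left this (by norm_num : (0:ℝ) ≤ 3)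
    have htailH : (∑' m : ℤ, (if (m:ℝ) ∈ Set.Icc (R - D) (R + D) then 0
        else G m ^ 2 / |(m:ℝ) - ((n:ℝ) + 1/2)|)) ≤ 3 * (C * g k / D) := by
      calc (∑' m : ℤ, (if (m:ℝ) ∈ Set.Icc (R - D) (R + D) then 0
            else G m ^ 2 / |(m:ℝ) - ((n:ℝ) + 1/2)|))
          ≤ ∑' m : ℤ, 3 * (if (m:ℝ) ∈ Set.Icc (R - D) (R + D) then 0
            else G m ^ 2 / |(m:ℝ) - R|) := by
            apply Summable.tsum_le_tsum _ hS4 (hS3.mul_left 3)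
            intro m
            by_cases hm : (m:ℝ) ∈ Set.Icc (R - D) (R + D)
            · simp [hm]
            · rw [if_neg hm, if_neg hm]
              obtain ⟨hb1, hb2, hb3⟩ := tail_bounds R D hD3 n m hnIcc hm
              exact (div_bounds (G m) R D hD3 _ _ hb1 hb2 hb3).2
        _ = 3 * ∑' m : ℤ, (if (m:ℝ) ∈ Set.Icc (R - D) (R + D) then 0
            else G m ^ 2 / |(m:ℝ) - R|) := tsum_mul_left
        _ ≤ 3 * (C * g k / D) := by
            have := h1 k
            apply mul_le_mul_of_nonneg_left this (by norm_num : (0:ℝ) ≤ 3)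
    constructor
    · -- quadratic sum
      have hsplit : (∑' m : ℤ, G m ^ 2 / ((n : ℝ) + 1 / 2 - m) ^ 2)
          = Qin n + ∑' m : ℤ, (if (m:ℝ) ∈ Set.Icc (R - D) (R + D) then 0
            else G m ^ 2 / (((m:ℝ) - ((n:ℝ) + 1/2))^2)) := by
        have hpt : ∀ m : ℤ, G m ^ 2 / ((n : ℝ) + 1 / 2 - m) ^ 2
            = (if (m:ℝ) ∈ Set.Icc (R - D) (R + D)
                then G m ^ 2 / (((m:ℝ) - ((n:ℝ) + 1/2))^2) else 0)
              + (if (m:ℝ) ∈ Set.Icc (R - D) (R + D) then 0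
                else G m ^ 2 / (((m:ℝ) - ((n:ℝ) + 1/2))^2)) := by
          intro m
          have hd2 : ((n : ℝ) + 1 / 2 - m) ^ 2 = ((m:ℝ) - ((n:ℝ) + 1/2))^2 := by ring
          rw [hd2]
          by_cases hm : (m:ℝ) ∈ Set.Icc (R - D) (R + D)
          · rw [if_pos hm, if_pos hm, add_zero]
          · rw [if_neg hm, if_neg hm, zero_add]
        rw [tsum_congr hpt, Summable.tsum_add hS2 hS1]
        congr 1
        rw [tsum_eq_sum (s := IZ) (fun m hm => if_neg (fun hc => hm ((hIZ m).mpr hc)))]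
        exact Finset.sum_congr rfl fun m hm => if_pos ((hIZ m).mp hm)
      rw [hsplit]
      have hfinal : lam + 3 * (C * g k / D) = (112 + 3 * C) * g k / D := by
        rw [hlam]; ring
      calc Qin n + (∑' m : ℤ, (if (m:ℝ) ∈ Set.Icc (R - D) (R + D) then 0
            else G m ^ 2 / (((m:ℝ) - ((n:ℝ) + 1/2))^2)))
          ≤ lam + 3 * (C * g k / D) := add_le_add hQle htailQ
        _ = (112 + 3 * C) * g k / D := hfinal
    · -- Hilbert sum
      have hsplit : (∑' m : ℤ, G m ^ 2 / ((m : ℝ) - n - 1 / 2))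
          = Hin n + ∑' m : ℤ, (if (m:ℝ) ∈ Set.Icc (R - D) (R + D) then 0
            else G m ^ 2 / ((m:ℝ) - ((n:ℝ) + 1/2))) := by
        have hpt : ∀ m : ℤ, G m ^ 2 / ((m : ℝ) - n - 1 / 2)
            = (if (m:ℝ) ∈ Set.Icc (R - D) (R + D)
                then G m ^ 2 / ((m:ℝ) - ((n:ℝ) + 1/2)) else 0)
              + (if (m:ℝ) ∈ Set.Icc (R - D) (R + D) then 0
                else G m ^ 2 / ((m:ℝ) - ((n:ℝ) + 1/2))) := by
          intro m
          have hd2 : (m : ℝ) - n - 1 / 2 = (m:ℝ) - ((n:ℝ) + 1/2) := by ring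
          rw [hd2]
          by_cases hm : (m:ℝ) ∈ Set.Icc (R - D) (R + D)
          · rw [if_pos hm, if_pos hm, add_zero]
          · rw [if_neg hm, if_neg hm, zero_add]
        rw [tsum_congr hpt, Summable.tsum_add hS6 hS5]
        congr 1
        rw [tsum_eq_sum (s := IZ) (fun m hm => if_neg (fun hc => hm ((hIZ m).mpr hc)))]
        exact Finset.sum_congr rfl fun m hm => if_pos ((hIZ m).mp hm)
      rw [hsplit]
      have habs2 : |∑' m : ℤ, (if (m:ℝ) ∈ Set.Icc (R - D) (R + D) then 0
          else G m ^ 2 / ((m:ℝ) - ((n:ℝ) + 1/2)))|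
          ≤ ∑' m : ℤ, (if (m:ℝ) ∈ Set.Icc (R - D) (R + D) then 0
          else G m ^ 2 / |(m:ℝ) - ((n:ℝ) + 1/2)|) := by
        have hnorm := norm_tsum_le_tsum_norm (f := fun m : ℤ =>
          if (m:ℝ) ∈ Set.Icc (R - D) (R + D) then 0
          else G m ^ 2 / ((m:ℝ) - ((n:ℝ) + 1/2))) ?_
        · rw [Real.norm_eq_abs] at hnorm
          refine le_trans hnorm (le_of_eq (tsum_congr fun m => ?_))
          show ‖(if (m:ℝ) ∈ Set.Icc (R - D) (R + D) then (0:ℝ)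
              else G m ^ 2 / ((m:ℝ) - ((n:ℝ) + 1/2)))‖
            = (if (m:ℝ) ∈ Set.Icc (R - D) (R + D) then (0:ℝ)
              else G m ^ 2 / |(m:ℝ) - ((n:ℝ) + 1/2)|)
          by_cases hm : (m:ℝ) ∈ Set.Icc (R - D) (R + D)
          · simp [hm]
          · rw [if_neg hm, if_neg hm, Real.norm_eq_abs, abs_div,
              abs_of_nonneg (sq_nonneg (G m))]
        · have := hS4
          apply Summable.congr this
          intro m
          show (if (m:ℝ) ∈ Set.Icc (R - D) (R + D) then (0:ℝ)
              else G m ^ 2 / |(m:ℝ) - ((n:ℝ) + 1/2)|)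
            = ‖(if (m:ℝ) ∈ Set.Icc (R - D) (R + D) then (0:ℝ)
              else G m ^ 2 / ((m:ℝ) - ((n:ℝ) + 1/2)))‖
          by_cases hm : (m:ℝ) ∈ Set.Icc (R - D) (R + D)
          · simp [hm]
          · rw [if_neg hm, if_neg hm, Real.norm_eq_abs, abs_div,
              abs_of_nonneg (sq_nonneg (G m))]
      have hfinal : lam + 3 * (C * g k / D) = (112 + 3 * C) * g k / D := by
        rw [hlam]; ring
      calc |Hin n + ∑' m : ℤ, (if (m:ℝ) ∈ Set.Icc (R - D) (R + D) then 0
            else G m ^ 2 / ((m:ℝ) - ((n:ℝ) + 1/2)))|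
          ≤ |Hin n| + |∑' m : ℤ, (if (m:ℝ) ∈ Set.Icc (R - D) (R + D) then 0
            else G m ^ 2 / ((m:ℝ) - ((n:ℝ) + 1/2)))| := abs_add_le _ _
        _ ≤ lam + 3 * (C * g k / D) := add_le_add hHle (le_trans habs2 htailH)
        _ = (112 + 3 * C) * g k / D := hfinal
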